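/- arXiv:2403.04713 — 6 statements merged into one kernel-verified Lean document; each statement's English description precedes it below -/
import Mathlib

section
/- Let I be a finite index set and for each i in I let C_i and S_i be Hermitian operators on a finite-dimensional Hilbert space A_i such that C_i ≤ S_i and -C_i ≤ S_i. Then the tensor product ⊗_i C_i satisfies ⊗_i C_i ≤ ⊗_i S_i and -(⊗_i C_i) ≤ ⊗_i S_i (inequalities in the Loewner order on ⊗_i A_i). -/
open Matrix ComplexOrder

/-- Tensor product over a finite index set, realised as a matrix on the Pi type. -/
noncomputable def piTensor {I : Type*} [Fintype I] {d : I → ℕ}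
    (M : ∀ i, Matrix (Fin (d i)) (Fin (d i)) ℂ) :
    Matrix (∀ i, Fin (d i)) (∀ i, Fin (d i)) ℂ :=
  Matrix.of fun a b => ∏ i, M i (a i) (b i)

/-- The tensor product of positive semidefinite matrices is positive semidefinite. -/
lemma piTensor_posSemidef {I : Type*} [Fintype I] [DecidableEq I] {d : I → ℕ}
    (M : ∀ i, Matrix (Fin (d i)) (Fin (d i)) ℂ) (hM : ∀ i, (M i).PosSemidef) :
    (piTensor M).PosSemidef := by
  have hB : ∀ i, ∃ B, M i = Bᴴ * B := fun i =>
    by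
      classical
      open scoped MatrixOrder in
      obtain ⟨B, hB⟩ := CStarAlgebra.nonneg_iff_eq_star_mul_self.mp (hM i).nonneg
      exact ⟨B, hB⟩
  choose B hB using hB
  have key : piTensor M = (piTensor B)ᴴ * piTensor B := by
    ext a b
    simp only [Matrix.mul_apply, Matrix.conjTranspose_apply, piTensor, Matrix.of_apply]
    calc ∏ i, M i (a i) (b i)
        = ∏ i, ∑ k, star (B i k (a i)) * B i k (b i) := by
          refine Finset.prod_congr rfl fun i _ => ?_
          rw [hB i]; simp [Matrix.mul_apply, Matrix.conjTranspose_apply]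
      _ = ∑ p ∈ Fintype.piFinset (fun _ => Finset.univ),
            ∏ i, star (B i (p i) (a i)) * B i (p i) (b i) := Finset.prod_univ_sum _ _
      _ = ∑ p : ∀ i, Fin (d i), star (∏ i, B i (p i) (a i)) * ∏ i, B i (p i) (b i) := by
          rw [Fintype.piFinset_univ]
          refine Finset.sum_congr rfl fun p _ => ?_
          rw [Finset.prod_mul_distrib, star_prod]
  rw [key]
  exact Matrix.posSemidef_conjTranspose_mul_self _

lemma piTensor_smul_real {I : Type*} [Fintype I] [DecidableEq I] {d : I → ℕ} (c : ℝ)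
    {M : Matrix (∀ i, Fin (d i)) (∀ i, Fin (d i)) ℂ} (hc : 0 ≤ c)
    (hM : M.PosSemidef) : ((c : ℂ) • M).PosSemidef := by
  refine Matrix.PosSemidef.of_dotProduct_mulVec_nonneg ?_ ?_
  · rw [Matrix.IsHermitian]
    rw [Matrix.conjTranspose_smul, hM.1]
    congr 1
    simp [RCLike.star_def, Complex.conj_ofReal]
  · intro x
    rw [Matrix.smul_mulVec, dotProduct_smul, smul_eq_mul]
    exact mul_nonneg (Complex.zero_le_real.mpr hc) (hM.dotProduct_mulVec_nonneg x)

/-- Multilinear expansion of the tensor product of sums. -/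
lemma piTensor_expand {I : Type*} [Fintype I] [DecidableEq I] {d : I → ℕ} (ε : ℂ)
    (P Q : ∀ i, Matrix (Fin (d i)) (Fin (d i)) ℂ) :
    piTensor (fun i => P i + ε • Q i) =
      ∑ T : Finset I, ε ^ Tᶜ.card •
        piTensor (fun i => if i ∈ T then P i else Q i) := by
  ext a b
  simp only [piTensor, Matrix.of_apply, Matrix.sum_apply, Matrix.smul_apply,
    Matrix.add_apply, smul_eq_mul]
  rw [Fintype.prod_add]
  refine Finset.sum_congr rfl fun T _ => ?_
  rw [Finset.prod_mul_distrib, Finset.prod_const]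
  have h2 : ∏ i, (if i ∈ T then P i else Q i) (a i) (b i) =
      (∏ i ∈ T, P i (a i) (b i)) * ∏ i ∈ Tᶜ, Q i (a i) (b i) := by
    rw [← Finset.prod_mul_prod_compl T]
    congr 1
    · exact Finset.prod_congr rfl fun i hi => by simp [hi]
    · refine Finset.prod_congr rfl fun i hi => by
        simp [Finset.mem_compl.mp hi]
  rw [h2]
  ring

theorem tensorized_loewner_bound {I : Type*} [Fintype I] [DecidableEq I] {d : I → ℕ}
    (C S : ∀ i, Matrix (Fin (d i)) (Fin (d i)) ℂ)
    (hC : ∀ i, (C i).IsHermitian) (hS : ∀ i, (S i).IsHermitian)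
    (h₁ : ∀ i, (S i - C i).PosSemidef) (h₂ : ∀ i, (S i + C i).PosSemidef) :
    (piTensor S - piTensor C).PosSemidef ∧ (piTensor S + piTensor C).PosSemidef := by
  classical
  set n := Fintype.card I with hn
  set P : ∀ i, Matrix (Fin (d i)) (Fin (d i)) ℂ := fun i => S i + C i with hP
  set Q : ∀ i, Matrix (Fin (d i)) (Fin (d i)) ℂ := fun i => S i - C i with hQ
  set mix : Finset I → Matrix (∀ i, Fin (d i)) (∀ i, Fin (d i)) ℂ :=
    fun T => piTensor (fun i => if i ∈ T then P i else Q i) with hmix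
  have hmixPSD : ∀ T, (mix T).PosSemidef := fun T =>
    piTensor_posSemidef _ fun i => by
      split_ifs with h
      · exact h₂ i
      · exact h₁ i
  have hSexp : (2 : ℂ) ^ n • piTensor S = ∑ T : Finset I, mix T := by
    have : piTensor (fun i => P i + (1 : ℂ) • Q i) =
        ∑ T : Finset I, (1 : ℂ) ^ Tᶜ.card • mix T := piTensor_expand 1 P Q
    simp only [one_smul, one_pow] at this
    rw [← this]
    ext a b
    simp only [piTensor, Matrix.of_apply, Matrix.smul_apply, smul_eq_mul]
    have : ∀ i, (P i + Q i) (a i) (b i) = 2 * S i (a i) (b i) := by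
      intro i; simp [hP, hQ, Matrix.add_apply, Matrix.sub_apply]; ring
    simp only [this]
    rw [Finset.prod_mul_distrib, Finset.prod_const]
    simp [hn]
  have hCexp : (2 : ℂ) ^ n • piTensor C =
      ∑ T : Finset I, (-1 : ℂ) ^ Tᶜ.card • mix T := by
    have : piTensor (fun i => P i + (-1 : ℂ) • Q i) =
        ∑ T : Finset I, (-1 : ℂ) ^ Tᶜ.card • mix T := piTensor_expand (-1) P Q
    rw [← this]
    ext a b
    simp only [piTensor, Matrix.of_apply, Matrix.smul_apply, smul_eq_mul]
    have : ∀ i, (P i + (-1 : ℂ) • Q i) (a i) (b i) = 2 * C i (a i) (b i) := by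
      intro i
      simp [hP, hQ, Matrix.add_apply, Matrix.sub_apply, Matrix.smul_apply]; ring
    simp only [this]
    rw [Finset.prod_mul_distrib, Finset.prod_const]
    simp [hn]
  -- scaled versions
  have key : ∀ ξ : ℂ, ξ = 1 ∨ ξ = -1 →
      ((2 : ℂ) ^ n • (piTensor S + ξ • piTensor C)).PosSemidef := by
    intro ξ hξ
    have : (2 : ℂ) ^ n • (piTensor S + ξ • piTensor C) =
        ∑ T : Finset I, (1 + ξ * (-1 : ℂ) ^ Tᶜ.card) • mix T := by
      rw [smul_add, smul_comm, hSexp, hCexp, Finset.smul_sum, ← Finset.sum_add_distrib]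
      refine Finset.sum_congr rfl fun T _ => ?_
      rw [smul_smul, add_smul, one_smul]
    rw [this]
    refine Finset.sum_induction _ _ (fun a b ha hb => ha.add hb)
      (Matrix.PosSemidef.zero) fun T _ => ?_
    have hcoef : (1 + ξ * (-1 : ℂ) ^ Tᶜ.card) = 0 ∨
        (1 + ξ * (-1 : ℂ) ^ Tᶜ.card) = 2 := by
      rcases hξ with rfl | rfl <;> rcases Nat.even_or_odd Tᶜ.card with h | h <;>
        simp [h.neg_one_pow] <;> norm_num
    rcases hcoef with h | h
    · rw [h, zero_smul]; exact Matrix.PosSemidef.zero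
    · rw [h]
      have := (hmixPSD T).add (hmixPSD T)
      convert this using 1
      rw [two_smul]
  -- divide by 2^n
  have div : ∀ X : Matrix (∀ i, Fin (d i)) (∀ i, Fin (d i)) ℂ,
      ((2 : ℂ) ^ n • X).PosSemidef → X.PosSemidef := by
    intro X hX
    have h := piTensor_smul_real (((2 : ℝ) ^ n)⁻¹) (by positivity) hX
    rw [smul_smul] at h
    have h2 : ((((2:ℝ)^n)⁻¹ : ℝ) : ℂ) * (2:ℂ)^n = 1 := by
      push_cast
      field_simp
    rwa [h2, one_smul] at h
  constructor
  · have := key (-1) (Or.inr rfl)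
    have h := div _ this
    rwa [neg_one_smul, ← sub_eq_add_neg] at h
  · have := key 1 (Or.inl rfl)
    have h := div _ this
    rwa [one_smul] at h
end

section
/- For vectors a, r in {0,1}^n and a fixed bit k, the sum over all a in {0,1}^n of (1/2)[1 + (-1)^{a·1 + k}] · (-1)^{a·r} equals 2^{n-1}[δ_{r,0} + (-1)^k δ_{r,1}], where 0 = (0,...,0), 1 = (1,...,1), and a·r denotes the inner product mod 2 computed over the integers in the exponent. -/
lemma neg_one_pow_mod (m : ℕ) : (-1 : ℝ) ^ m = (-1 : ℝ) ^ (m % 2) := by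
  conv_lhs => rw [← Nat.div_add_mod m 2, pow_add, pow_mul]
  norm_num

lemma neg_one_pow_congr_mod {m m' : ℕ} (h : m % 2 = m' % 2) :
    (-1 : ℝ) ^ m = (-1 : ℝ) ^ m' := by
  rw [neg_one_pow_mod m, neg_one_pow_mod m', h]

lemma key {n : ℕ} (c : Fin n → Fin 2) :
    ∑ a : Fin n → Fin 2, (-1 : ℝ) ^ (∑ i, (a i : ℕ) * (c i : ℕ)) =
      if c = 0 then (2 : ℝ) ^ n else 0 := by
  have h1 : ∀ a : Fin n → Fin 2,
      (-1 : ℝ) ^ (∑ i, (a i : ℕ) * (c i : ℕ)) =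
        ∏ i, (-1 : ℝ) ^ ((a i : ℕ) * (c i : ℕ)) := by
    intro a; rw [← Finset.prod_pow_eq_pow_sum]
  simp only [h1]
  rw [← Fintype.piFinset_univ,
    ← Finset.prod_univ_sum (t := fun _ : Fin n => (Finset.univ : Finset (Fin 2)))
      (f := fun i y => (-1 : ℝ) ^ ((y : ℕ) * (c i : ℕ)))]
  by_cases hc : c = 0
  · subst hc
    simp
  · rw [if_neg hc]
    obtain ⟨i, hi⟩ : ∃ i, c i ≠ 0 := by
      by_contra h; push_neg at h; exact hc (funext h)
    apply Finset.prod_eq_zero (Finset.mem_univ i)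
    have : c i = 1 := by
      have h2 : (c i : ℕ) < 2 := (c i).isLt
      have h3 : (c i : ℕ) ≠ 0 := fun h => hi (Fin.ext h)
      apply Fin.ext; show (c i : ℕ) = 1; omega
    rw [Fin.sum_univ_two]
    simp [this]

theorem xor_character_sum {n : ℕ} (hn : 0 < n) (k : Fin 2) (r : Fin n → Fin 2) :
    ∑ a : Fin n → Fin 2,
        (1 / 2 : ℝ) * (1 + (-1 : ℝ) ^ ((∑ i, (a i : ℕ)) + (k : ℕ))) *
          (-1 : ℝ) ^ (∑ i, (a i : ℕ) * (r i : ℕ)) =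
      2 ^ (n - 1) *
        ((if r = 0 then (1 : ℝ) else 0) +
          (-1 : ℝ) ^ (k : ℕ) * (if r = 1 then (1 : ℝ) else 0)) := by
  have hval : ∀ x : Fin 2, ((x + 1 : Fin 2) : ℕ) = ((x : ℕ) + 1) % 2 := by decide
  have hstep : ∀ a : Fin n → Fin 2,
      (1 / 2 : ℝ) * (1 + (-1 : ℝ) ^ ((∑ i, (a i : ℕ)) + (k : ℕ))) *
          (-1 : ℝ) ^ (∑ i, (a i : ℕ) * (r i : ℕ)) =
        (1 / 2 : ℝ) * (-1 : ℝ) ^ (∑ i, (a i : ℕ) * (r i : ℕ)) +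
          (1 / 2 : ℝ) * (-1 : ℝ) ^ (k : ℕ) *
            (-1 : ℝ) ^ (∑ i, (a i : ℕ) * (((r i + 1 : Fin 2)) : ℕ)) := by
    intro a
    have hpar : (-1 : ℝ) ^ (((∑ i, (a i : ℕ)) + (∑ i, (a i : ℕ) * (r i : ℕ)))) =
        (-1 : ℝ) ^ (∑ i, (a i : ℕ) * (((r i + 1 : Fin 2)) : ℕ)) := by
      apply neg_one_pow_congr_mod
      rw [← Finset.sum_add_distrib]
      rw [Finset.sum_nat_mod, Finset.sum_nat_mod (f := fun i => (a i : ℕ) * (((r i + 1 : Fin 2)) : ℕ))]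
      congr 1
      apply Finset.sum_congr rfl
      intro i _
      rw [hval (r i)]
      have h2 : (r i : ℕ) = 0 ∨ (r i : ℕ) = 1 := by omega
      have h3 : (a i : ℕ) = 0 ∨ (a i : ℕ) = 1 := by omega
      rcases h2 with h2 | h2 <;> rcases h3 with h3 | h3 <;> simp [h2, h3]
    rw [pow_add (-1 : ℝ) (∑ i, (a i : ℕ)) (k : ℕ), ← hpar, pow_add]
    ring
  simp only [hstep]
  rw [Finset.sum_add_distrib, ← Finset.mul_sum, ← Finset.mul_sum, key r,
    key (fun i => r i + 1)]
  have hcond : ((fun i => r i + 1) = (0 : Fin n → Fin 2)) ↔ r = 1 := by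
    constructor
    · intro h; funext i
      have hv : ((r i + 1 : Fin 2) : ℕ) = 0 := by rw [congrFun h i]; rfl
      rw [hval (r i)] at hv
      have h2 : (r i : ℕ) < 2 := (r i).isLt
      apply Fin.ext
      show (r i : ℕ) = 1
      omega
    · intro h; subst h; funext i; show (1 : Fin 2) + 1 = 0; decide
  simp only [hcond]
  have h2n' : (2 : ℝ) ^ n = 2 * 2 ^ (n - 1) := by
    conv_lhs => rw [show n = (n - 1) + 1 by omega]
    rw [pow_succ]; ring
  have hne : (0 : Fin n → Fin 2) ≠ 1 := by
    intro h
    have h' := congrFun h ⟨0, hn⟩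
    simp only [Pi.zero_apply, Pi.one_apply] at h'
    exact absurd h' (by decide)
  by_cases hr0 : r = 0 <;> by_cases hr1 : r = 1
  · exact absurd (hr0 ▸ hr1) hne
  · simp only [hr0, hr1, if_true, if_false, eq_self_iff_true, if_neg hne, if_neg (Ne.symm hne)]
    rw [h2n']; ring
  · simp only [hr0, hr1, if_true, if_false, eq_self_iff_true, if_neg hne, if_neg (Ne.symm hne)]
    rw [h2n']; ring
  · simp only [hr0, hr1, if_false]
    simp
end

section
/- For integers n > 5 and m with 0 < m < n, there exists a function g: {0,1}^n → {0,1}^m such that for all k ∈ {0,1}^m and all r ∈ {0,1}^n, |Σ_{a ∈ {0,1}^n} (δ^k_{g(a)} − 2^{−m})(−1)^{a·r}| ≤ n² · (√2)^{n−m}. -/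
open Finset


private lemma exp_le_quadratic {s : ℝ} (hs : |s| ≤ 1) : Real.exp s ≤ 1 + s + s ^ 2 := by
  have h := Real.exp_bound hs (n := 2) (by norm_num)
  rw [show (∑ i ∈ Finset.range 2, s ^ i / i.factorial) = 1 + s by
    simp [Finset.sum_range_succ]] at h
  norm_num [Nat.factorial] at h
  have := abs_le.1 h
  nlinarith [sq_nonneg s, sq_abs s]

private lemma mgf_aux {p s : ℝ} (hp0 : 0 ≤ p) (hp1 : p ≤ 1) (hs : |s| ≤ 1) :
    p * Real.exp (s * (1 - p)) + (1 - p) * Real.exp (-(s * p)) ≤ Real.exp (p * s ^ 2) := by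
  have e1 : Real.exp (s * (1 - p)) = Real.exp s * Real.exp (-(s * p)) := by
    rw [← Real.exp_add]; congr 1; ring
  have h1 : p * Real.exp s + (1 - p) ≤ Real.exp (p * (Real.exp s - 1)) := by
    have := Real.add_one_le_exp (p * (Real.exp s - 1)); linarith
  have h2 : Real.exp s - 1 - s ≤ s ^ 2 := by have := exp_le_quadratic hs; linarith
  calc p * Real.exp (s * (1 - p)) + (1 - p) * Real.exp (-(s * p))
      = (p * Real.exp s + (1 - p)) * Real.exp (-(s * p)) := by rw [e1]; ring
    _ ≤ Real.exp (p * (Real.exp s - 1)) * Real.exp (-(s * p)) :=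
        mul_le_mul_of_nonneg_right h1 (Real.exp_pos _).le
    _ = Real.exp (p * (Real.exp s - 1 - s)) := by rw [← Real.exp_add]; congr 1; ring
    _ ≤ Real.exp (p * s ^ 2) := Real.exp_le_exp.2 (mul_le_mul_of_nonneg_left h2 hp0)

private lemma coord {m : ℕ} (k : Fin m → Fin 2) {e t : ℝ} (he : |e| = 1) (ht : |t| ≤ 1) :
    ∑ v : Fin m → Fin 2, Real.exp (t * (((if v = k then (1 : ℝ) else 0) - (2 : ℝ) ^ (-(m : ℤ))) * e))
      ≤ (2 : ℝ) ^ m * Real.exp ((2 : ℝ) ^ (-(m : ℤ)) * t ^ 2) := by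
  set μ : ℝ := (2 : ℝ) ^ (-(m : ℤ)) with hμdef
  have hM : (0 : ℝ) < 2 ^ m := by positivity
  have hM1 : (1 : ℝ) ≤ 2 ^ m := one_le_pow₀ (by norm_num)
  have hμM : μ * 2 ^ m = 1 := by
    rw [hμdef, zpow_neg, zpow_natCast]
    exact inv_mul_cancel₀ hM.ne'
  have hμ0 : 0 ≤ μ := by rw [hμdef]; positivity
  have hμ1 : μ ≤ 1 := by nlinarith
  have he2 : e ^ 2 = 1 := by rw [← sq_abs, he, one_pow]
  have hs : |t * e| ≤ 1 := by rw [abs_mul, he, mul_one]; exact ht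
  have hcard : (Finset.univ : Finset (Fin m → Fin 2)).card = 2 ^ m := by
    simp [Fintype.card_fun]
  rw [← Finset.add_sum_erase _ _ (Finset.mem_univ k)]
  have h2 : ∑ v ∈ Finset.univ.erase k,
      Real.exp (t * (((if v = k then (1 : ℝ) else 0) - μ) * e))
      = ((2:ℝ) ^ m - 1) * Real.exp (-((t * e) * μ)) := by
    rw [Finset.sum_congr rfl (fun v hv => by
      rw [if_neg (Finset.mem_erase.1 hv).1,
        show t * (((0:ℝ) - μ) * e) = -((t * e) * μ) by ring])]
    rw [Finset.sum_const, Finset.card_erase_of_mem (Finset.mem_univ k), hcard,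
      nsmul_eq_mul, Nat.cast_sub Nat.one_le_two_pow]
    push_cast; ring
  rw [h2, if_pos rfl]
  have hmain := mgf_aux hμ0 hμ1 hs
  rw [show t * ((1 - μ) * e) = (t * e) * (1 - μ) by ring]
  have heq : Real.exp ((t*e)*(1-μ)) + ((2:ℝ)^m - 1) * Real.exp (-((t*e)*μ))
      = 2^m * (μ * Real.exp ((t*e)*(1-μ)) + (1-μ) * Real.exp (-((t*e)*μ))) := by
    linear_combination (Real.exp (-((t*e)*μ)) - Real.exp ((t*e)*(1-μ))) * hμM
  rw [heq]
  have h3 := mul_le_mul_of_nonneg_left hmain hM.le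
  rw [show μ * (t*e)^2 = μ * t^2 by rw [mul_pow, he2]; ring] at h3
  exact h3

set_option maxHeartbeats 1000000 in
private lemma tail_count {n m : ℕ} (hmn : m ≤ n) (k : Fin m → Fin 2)
    (η : (Fin n → Fin 2) → ℝ) (hη : ∀ a, |η a| = 1) {t B : ℝ} (ht0 : 0 ≤ t) (ht1 : t ≤ 1)
    (T : Finset ((Fin n → Fin 2) → (Fin m → Fin 2)))
    (hT : ∀ g ∈ T, B ≤ ∑ a : Fin n → Fin 2,
      ((if g a = k then (1 : ℝ) else 0) - (2 : ℝ) ^ (-(m : ℤ))) * η a) :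
    (T.card : ℝ) ≤ ((2 : ℝ) ^ m) ^ (2 ^ n) * Real.exp (t ^ 2 * (2 : ℝ) ^ (n - m) - t * B) := by
  set μ : ℝ := (2 : ℝ) ^ (-(m : ℤ)) with hμdef
  have ht : |t| ≤ 1 := by rw [abs_of_nonneg ht0]; exact ht1
  have hcardA : (Finset.univ : Finset (Fin n → Fin 2)).card = 2 ^ n := by
    simp [Fintype.card_fun]
  have hμ2 : μ * (2 : ℝ) ^ n = (2 : ℝ) ^ (n - m) := by
    rw [hμdef, zpow_neg, zpow_natCast,
      show n = m + (n - m) by omega, pow_add]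
    field_simp
    rw [Nat.add_sub_cancel_left]
  have key : (T.card : ℝ) * Real.exp (t * B)
      ≤ ((2 : ℝ) ^ m) ^ (2 ^ n) * Real.exp (t ^ 2 * (2 : ℝ) ^ (n - m)) := by
    calc (T.card : ℝ) * Real.exp (t * B) = ∑ _g ∈ T, Real.exp (t * B) := by
          rw [Finset.sum_const, nsmul_eq_mul]
      _ ≤ ∑ g ∈ T, Real.exp (t * ∑ a, ((if g a = k then (1 : ℝ) else 0) - μ) * η a) := by
          refine Finset.sum_le_sum fun g hg => Real.exp_le_exp.2 ?_
          exact mul_le_mul_of_nonneg_left (hT g hg) ht0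
      _ ≤ ∑ g : (Fin n → Fin 2) → (Fin m → Fin 2),
            Real.exp (t * ∑ a, ((if g a = k then (1 : ℝ) else 0) - μ) * η a) :=
          Finset.sum_le_sum_of_subset_of_nonneg (Finset.subset_univ T)
            (fun _ _ _ => (Real.exp_pos _).le)
      _ = ∑ g : (Fin n → Fin 2) → (Fin m → Fin 2),
            ∏ a, Real.exp (t * (((if g a = k then (1 : ℝ) else 0) - μ) * η a)) := by
          refine Finset.sum_congr rfl fun g _ => ?_
          rw [Finset.mul_sum, Real.exp_sum]
      _ = ∏ a, ∑ v : Fin m → Fin 2,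
            Real.exp (t * (((if v = k then (1 : ℝ) else 0) - μ) * η a)) :=
          (Fintype.prod_sum (fun (a : Fin n → Fin 2) (v : Fin m → Fin 2) =>
            Real.exp (t * (((if v = k then (1 : ℝ) else 0) - μ) * η a)))).symm
      _ ≤ ∏ _a : Fin n → Fin 2, ((2 : ℝ) ^ m * Real.exp (μ * t ^ 2)) := by
          refine Finset.prod_le_prod (fun a _ => Finset.sum_nonneg fun v _ => (Real.exp_pos _).le)
            (fun a _ => coord k (hη a) ht)
      _ = ((2 : ℝ) ^ m) ^ (2 ^ n) * Real.exp (t ^ 2 * (2 : ℝ) ^ (n - m)) := by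
          rw [Finset.prod_const, hcardA, mul_pow, ← Real.exp_nat_mul]
          congr 2
          rw [← hμ2]; push_cast; ring
  rw [Real.exp_sub, ← mul_div_assoc]
  exact (le_div_iff₀ (Real.exp_pos _)).2 key

private lemma filter_lt_card {n m : ℕ} (hmn : m ≤ n) :
    (Finset.univ.filter (fun i : Fin n => (i : ℕ) < m)).card = m := by
  have : Finset.univ.filter (fun i : Fin n => (i : ℕ) < m)
      = Finset.map (Fin.castLEEmb hmn) Finset.univ := by
    ext x
    simp only [Finset.mem_filter, Finset.mem_univ, true_and, Finset.mem_map]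
    constructor
    · intro hx; exact ⟨⟨x.1, hx⟩, by ext; rfl⟩
    · rintro ⟨j, -, rfl⟩; exact j.2
  rw [this, Finset.card_map, Finset.card_univ, Fintype.card_fin]

set_option maxHeartbeats 1000000 in
private lemma proj_bound {n m : ℕ} (hmn : m < n) (k : Fin m → Fin 2) (r : Fin n → Fin 2) :
    |∑ a : Fin n → Fin 2,
        (((if (fun j => a (Fin.castLE hmn.le j)) = k then (1 : ℝ) else 0) - (2 : ℝ) ^ (-(m : ℤ))) *
          (-1 : ℝ) ^ (∑ i, (a i : ℕ) * (r i : ℕ)))| ≤ 2 * (2 : ℝ) ^ (n - m) := by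
  set μ : ℝ := (2 : ℝ) ^ (-(m : ℤ)) with hμdef
  set η : (Fin n → Fin 2) → ℝ := fun a => (-1 : ℝ) ^ (∑ i, (a i : ℕ) * (r i : ℕ)) with hηdef
  show |∑ a : Fin n → Fin 2,
      (((if (fun j => a (Fin.castLE hmn.le j)) = k then (1 : ℝ) else 0) - μ) * η a)|
      ≤ 2 * (2 : ℝ) ^ (n - m)
  have hμ0 : 0 ≤ μ := by rw [hμdef]; positivity
  have hμ2 : μ * (2 : ℝ) ^ n = (2 : ℝ) ^ (n - m) := by
    rw [hμdef, zpow_neg, zpow_natCast, show n = m + (n - m) by omega, pow_add]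
    field_simp
    rw [Nat.add_sub_cancel_left]
  have hη_prod : ∀ a : Fin n → Fin 2, η a = ∏ i, (-1 : ℝ) ^ ((a i : ℕ) * (r i : ℕ)) := by
    intro a; rw [hηdef]; exact (Finset.prod_pow_eq_pow_sum _ _ _).symm
  have hsplit : ∑ a : Fin n → Fin 2,
      (((if (fun j => a (Fin.castLE hmn.le j)) = k then (1 : ℝ) else 0) - μ) * η a)
      = (∑ a : Fin n → Fin 2, (if (fun j => a (Fin.castLE hmn.le j)) = k then (1 : ℝ) else 0) * η a)
        - μ * ∑ a : Fin n → Fin 2, η a := by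
    rw [Finset.mul_sum, ← Finset.sum_sub_distrib]
    exact Finset.sum_congr rfl fun a _ => by ring
  have hP2 : (∑ a : Fin n → Fin 2, η a) = 0 ∨ (∑ a : Fin n → Fin 2, η a) = (2 : ℝ) ^ n := by
    by_cases hr : ∀ i, r i = 0
    · right
      have h1 : ∀ a : Fin n → Fin 2, η a = 1 := by
        intro a
        have hz : (∑ i, (a i : ℕ) * (r i : ℕ)) = 0 := by
          apply Finset.sum_eq_zero; intro i _; rw [hr i]; simp
        simp [hηdef, hz]
      rw [Finset.sum_congr rfl fun a _ => h1 a, Finset.sum_const, Finset.card_univ]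
      simp [Fintype.card_fun]
    · left
      push_neg at hr
      obtain ⟨i0, hi0⟩ := hr
      have hi0' : (r i0 : ℕ) = 1 := by omega
      rw [Finset.sum_congr rfl fun a _ => hη_prod a,
        ← Fintype.prod_sum (fun (i : Fin n) (b : Fin 2) => (-1 : ℝ) ^ ((b : ℕ) * (r i : ℕ)))]
      apply Finset.prod_eq_zero (Finset.mem_univ i0)
      rw [Fin.sum_univ_two]
      norm_num [hi0']
  have hd : ∀ a : Fin n → Fin 2,
      (if (fun j => a (Fin.castLE hmn.le j)) = k then (1 : ℝ) else 0) * η a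
      = ∏ i : Fin n, ((if h : (i : ℕ) < m then (if a i = k ⟨i, h⟩ then (1:ℝ) else 0) else 1)
          * (-1 : ℝ) ^ ((a i : ℕ) * (r i : ℕ))) := by
    intro a
    rw [Finset.prod_mul_distrib, ← hη_prod a]
    congr 1
    by_cases hk : (fun j => a (Fin.castLE hmn.le j)) = k
    · rw [if_pos hk]
      refine (Finset.prod_eq_one fun i _ => ?_).symm
      by_cases h : (i : ℕ) < m
      · rw [dif_pos h, if_pos]
        have := congrFun hk ⟨i, h⟩
        simpa using this
      · rw [dif_neg h]
    · rw [if_neg hk]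
      symm
      have hex : ∃ j : Fin m, a (Fin.castLE hmn.le j) ≠ k j := by
        by_contra hc; push_neg at hc; exact hk (funext hc)
      obtain ⟨j, hj⟩ := hex
      apply Finset.prod_eq_zero (Finset.mem_univ (Fin.castLE hmn.le j))
      rw [dif_pos (show ((Fin.castLE hmn.le j : Fin n) : ℕ) < m from j.2)]
      rw [if_neg (by simpa using hj)]
  have hP1 : |∑ a : Fin n → Fin 2,
      (if (fun j => a (Fin.castLE hmn.le j)) = k then (1 : ℝ) else 0) * η a| ≤ (2 : ℝ) ^ (n - m) := by
    rw [Finset.sum_congr rfl fun a _ => hd a,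
      ← Fintype.prod_sum (fun (i : Fin n) (b : Fin 2) =>
        (if h : (i : ℕ) < m then (if b = k ⟨i, h⟩ then (1:ℝ) else 0) else 1)
          * (-1 : ℝ) ^ ((b : ℕ) * (r i : ℕ)))]
    calc |∏ i : Fin n, ∑ b : Fin 2,
          ((if h : (i : ℕ) < m then (if b = k ⟨i, h⟩ then (1:ℝ) else 0) else 1)
            * (-1 : ℝ) ^ ((b : ℕ) * (r i : ℕ)))|
        = ∏ i : Fin n, |∑ b : Fin 2,
          ((if h : (i : ℕ) < m then (if b = k ⟨i, h⟩ then (1:ℝ) else 0) else 1)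
            * (-1 : ℝ) ^ ((b : ℕ) * (r i : ℕ)))| := Finset.abs_prod _ _
      _ ≤ ∏ i : Fin n, (if (i : ℕ) < m then (1 : ℝ) else 2) := by
          refine Finset.prod_le_prod (fun i _ => abs_nonneg _) (fun i _ => ?_)
          refine (Finset.abs_sum_le_sum_abs _ _).trans ?_
          by_cases h : (i : ℕ) < m
          · rw [if_pos h]
            have hb : ∀ b : Fin 2, |(if h' : (i : ℕ) < m then (if b = k ⟨i, h'⟩ then (1:ℝ) else 0) else 1)
                * (-1 : ℝ) ^ ((b : ℕ) * (r i : ℕ))| = if b = k ⟨i, h⟩ then (1:ℝ) else 0 := by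
              intro b
              rw [dif_pos h]
              split_ifs <;> simp [abs_mul, abs_pow]
            rw [Finset.sum_congr rfl fun b _ => hb b]
            simp
          · rw [if_neg h]
            have hb : ∀ b : Fin 2, |(if h' : (i : ℕ) < m then (if b = k ⟨i, h'⟩ then (1:ℝ) else 0) else 1)
                * (-1 : ℝ) ^ ((b : ℕ) * (r i : ℕ))| = 1 := by
              intro b
              rw [dif_neg h]
              simp [abs_mul, abs_pow]
            rw [Finset.sum_congr rfl fun b _ => hb b, Fin.sum_univ_two]
            norm_num
      _ = (2 : ℝ) ^ (n - m) := by
          rw [Finset.prod_ite, Finset.prod_const_one, Finset.prod_const, one_mul]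
          congr 1
          have h1 := filter_lt_card (n := n) hmn.le
          have h2 := Finset.card_filter_add_card_filter_not
            (s := (Finset.univ : Finset (Fin n))) (p := fun i : Fin n => (i : ℕ) < m)
          rw [Finset.card_univ, Fintype.card_fin] at h2
          omega
  rw [hsplit]
  have habs := (abs_sub _ _).trans (add_le_add_left hP1
    |μ * ∑ a : Fin n → Fin 2, η a|)
  refine habs.trans ?_
  have hlast : |μ * ∑ a : Fin n → Fin 2, η a| ≤ (2:ℝ) ^ (n - m) := by
    rcases hP2 with h | h
    · rw [h, mul_zero, abs_zero]; positivity
    · rw [h, abs_of_nonneg (by positivity), hμ2]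
  linarith

set_option maxHeartbeats 1600000 in
/-- Existence of `m`-bit seedless extractor functions: for `n > 5` and `0 < m < n` there is
`g : {0,1}ⁿ → {0,1}ᵐ` with `|Σ_a (δ^k_{g(a)} - 2^{-m})(-1)^{a·r}| ≤ n² √2^{n-m}` for all
`k` and `r`. -/
theorem exists_m_bit_extractor_function {n m : ℕ} (hn : 5 < n) (hm : 0 < m) (hmn : m < n) :
    ∃ g : (Fin n → Fin 2) → (Fin m → Fin 2),
      ∀ (k : Fin m → Fin 2) (r : Fin n → Fin 2),
        |∑ a : Fin n → Fin 2,
            (((if g a = k then (1 : ℝ) else 0) - (2 : ℝ) ^ (-(m : ℤ))) *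
              (-1 : ℝ) ^ (∑ i, (a i : ℕ) * (r i : ℕ)))| ≤
          (n : ℝ) ^ 2 * Real.sqrt 2 ^ (n - m) := by
  classical
  have hnR : (6 : ℝ) ≤ (n : ℝ) := by exact_mod_cast hn
  set s2 : ℝ := Real.sqrt 2 ^ (n - m) with hs2def
  have hs2pos : 0 < s2 := by
    rw [hs2def]; exact pow_pos (Real.sqrt_pos.2 (by norm_num)) _
  have hs2sq : s2 ^ 2 = (2 : ℝ) ^ (n - m) := by
    rw [hs2def, ← pow_mul, mul_comm, pow_mul, Real.sq_sqrt (by norm_num : (0:ℝ) ≤ 2)]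
  by_cases hcase : 2 * s2 ≤ (n : ℝ) ^ 2
  · refine ⟨fun a j => a (Fin.castLE hmn.le j), fun k r => ?_⟩
    refine (proj_bound hmn k r).trans ?_
    rw [← hs2sq]
    calc 2 * s2 ^ 2 = (2 * s2) * s2 := by ring
      _ ≤ (n : ℝ) ^ 2 * s2 := mul_le_mul_of_nonneg_right hcase hs2pos.le
  · push_neg at hcase
    by_contra hcon
    push_neg at hcon
    set μ : ℝ := (2 : ℝ) ^ (-(m : ℤ)) with hμdef
    set B : ℝ := (n : ℝ) ^ 2 * s2 with hBdef
    set t : ℝ := (n : ℝ) ^ 2 / (2 * s2) with htdef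
    have hn2pos : (0 : ℝ) < (n : ℝ) ^ 2 := by nlinarith
    have ht0 : 0 ≤ t := by rw [htdef]; positivity
    have ht1 : t ≤ 1 := by
      rw [htdef, div_le_one (by positivity)]; linarith
    have hexp : t ^ 2 * (2 : ℝ) ^ (n - m) - t * B = -((n : ℝ) ^ 4 / 4) := by
      rw [htdef, hBdef, ← hs2sq]
      field_simp
      ring
    -- the bad sets
    set η : (Fin n → Fin 2) → (Fin n → Fin 2) → ℝ :=
      fun r a => (-1 : ℝ) ^ (∑ i, (a i : ℕ) * (r i : ℕ)) with hηdef
    have hη1 : ∀ r a, |η r a| = 1 := by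
      intro r a; rw [hηdef]; simp [abs_pow]
    set Tp : (Fin m → Fin 2) → (Fin n → Fin 2) →
        Finset ((Fin n → Fin 2) → (Fin m → Fin 2)) := fun k r =>
      Finset.univ.filter (fun g => B ≤ ∑ a : Fin n → Fin 2,
        ((if g a = k then (1 : ℝ) else 0) - μ) * η r a) with hTpdef
    set Tm : (Fin m → Fin 2) → (Fin n → Fin 2) →
        Finset ((Fin n → Fin 2) → (Fin m → Fin 2)) := fun k r =>
      Finset.univ.filter (fun g => B ≤ ∑ a : Fin n → Fin 2,
        ((if g a = k then (1 : ℝ) else 0) - μ) * (-(η r a))) with hTmdef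
    have hcover : (Finset.univ : Finset ((Fin n → Fin 2) → (Fin m → Fin 2)))
        ⊆ (Finset.univ : Finset ((Fin m → Fin 2) × (Fin n → Fin 2))).biUnion
          (fun p => Tp p.1 p.2 ∪ Tm p.1 p.2) := by
      intro g _
      obtain ⟨k, r, hkr⟩ := hcon g
      refine Finset.mem_biUnion.2 ⟨(k, r), Finset.mem_univ _, ?_⟩
      rcases abs_cases (∑ a : Fin n → Fin 2,
          ((if g a = k then (1 : ℝ) else 0) - μ) * η r a) with ⟨he, -⟩ | ⟨he, -⟩
      · refine Finset.mem_union_left _ (Finset.mem_filter.2 ⟨Finset.mem_univ _, ?_⟩)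
        rw [← he]; exact hkr.le
      · refine Finset.mem_union_right _ (Finset.mem_filter.2 ⟨Finset.mem_univ _, ?_⟩)
        have hneg : ∑ a : Fin n → Fin 2,
            ((if g a = k then (1 : ℝ) else 0) - μ) * (-(η r a))
            = -∑ a : Fin n → Fin 2, ((if g a = k then (1 : ℝ) else 0) - μ) * η r a := by
          rw [← Finset.sum_neg_distrib]
          exact Finset.sum_congr rfl fun a _ => by ring
        rw [hneg, ← he]; exact hkr.le
    -- counting
    have hcardN : Fintype.card ((Fin n → Fin 2) → (Fin m → Fin 2))
        ≤ ∑ p : (Fin m → Fin 2) × (Fin n → Fin 2), ((Tp p.1 p.2).card + (Tm p.1 p.2).card) := by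
      calc Fintype.card ((Fin n → Fin 2) → (Fin m → Fin 2))
          = (Finset.univ : Finset ((Fin n → Fin 2) → (Fin m → Fin 2))).card := rfl
        _ ≤ ((Finset.univ : Finset ((Fin m → Fin 2) × (Fin n → Fin 2))).biUnion
            (fun p => Tp p.1 p.2 ∪ Tm p.1 p.2)).card := Finset.card_le_card hcover
        _ ≤ ∑ p : (Fin m → Fin 2) × (Fin n → Fin 2), (Tp p.1 p.2 ∪ Tm p.1 p.2).card :=
            Finset.card_biUnion_le
        _ ≤ ∑ p : (Fin m → Fin 2) × (Fin n → Fin 2), ((Tp p.1 p.2).card + (Tm p.1 p.2).card) :=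
            Finset.sum_le_sum fun p _ => Finset.card_union_le _ _
    have hcardG : (Fintype.card ((Fin n → Fin 2) → (Fin m → Fin 2)) : ℝ)
        = ((2 : ℝ) ^ m) ^ (2 ^ n) := by
      simp [Fintype.card_fun]
    have htail : ∀ p : (Fin m → Fin 2) × (Fin n → Fin 2),
        ((Tp p.1 p.2).card : ℝ) + ((Tm p.1 p.2).card : ℝ)
          ≤ 2 * (((2 : ℝ) ^ m) ^ (2 ^ n) * Real.exp (-((n : ℝ) ^ 4 / 4))) := by
      intro p
      have h1 := tail_count hmn.le p.1 (η p.2) (hη1 p.2) ht0 ht1 (Tp p.1 p.2)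
        (fun g hg => (Finset.mem_filter.1 hg).2)
      have h2 := tail_count hmn.le p.1 (fun a => -(η p.2 a))
        (fun a => by rw [abs_neg]; exact hη1 p.2 a) ht0 ht1 (Tm p.1 p.2)
        (fun g hg => (Finset.mem_filter.1 hg).2)
      rw [hexp] at h1 h2
      linarith
    have hfinal : (Fintype.card ((Fin n → Fin 2) → (Fin m → Fin 2)) : ℝ)
        ≤ (2:ℝ) ^ m * 2 ^ n * (2 * (((2 : ℝ) ^ m) ^ (2 ^ n) * Real.exp (-((n : ℝ) ^ 4 / 4)))) := by
      calc (Fintype.card ((Fin n → Fin 2) → (Fin m → Fin 2)) : ℝ)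
          ≤ ((∑ p : (Fin m → Fin 2) × (Fin n → Fin 2),
              ((Tp p.1 p.2).card + (Tm p.1 p.2).card) : ℕ) : ℝ) := Nat.cast_le.2 hcardN
        _ = ∑ p : (Fin m → Fin 2) × (Fin n → Fin 2),
              (((Tp p.1 p.2).card : ℝ) + ((Tm p.1 p.2).card : ℝ)) := by push_cast; rfl
        _ ≤ ∑ _p : (Fin m → Fin 2) × (Fin n → Fin 2),
              (2 * (((2 : ℝ) ^ m) ^ (2 ^ n) * Real.exp (-((n : ℝ) ^ 4 / 4)))) :=
            Finset.sum_le_sum fun p _ => htail p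
        _ = (2:ℝ) ^ m * 2 ^ n * (2 * (((2 : ℝ) ^ m) ^ (2 ^ n) * Real.exp (-((n : ℝ) ^ 4 / 4)))) := by
            rw [Finset.sum_const, Finset.card_univ, nsmul_eq_mul]
            congr 1
            simp [Fintype.card_prod, Fintype.card_fun]
    -- numeric contradiction
    have hsmall : (2:ℝ) ^ m * 2 ^ n * 2 * Real.exp (-((n : ℝ) ^ 4 / 4)) < 1 := by
      have h2e : (2 : ℝ) ≤ Real.exp 1 := by
        have := Real.add_one_le_exp (1 : ℝ); linarith
      have hpow : (2:ℝ) ^ m * 2 ^ n * 2 ≤ (2:ℝ) ^ (2 * n) := by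
        rw [← pow_add, ← pow_succ]
        exact pow_le_pow_right₀ (by norm_num) (by omega)
      have hexp2 : (2:ℝ) ^ (2 * n) ≤ Real.exp ((2 * n : ℕ) : ℝ) := by
        calc (2:ℝ) ^ (2 * n) ≤ (Real.exp 1) ^ (2 * n) :=
              pow_le_pow_left₀ (by norm_num) h2e _
          _ = Real.exp ((2 * n : ℕ) : ℝ) := by rw [← Real.exp_nat_mul, mul_one]
      have hlt : ((2 * n : ℕ) : ℝ) < (n : ℝ) ^ 4 / 4 := by
        have hkey := mul_le_mul_of_nonneg_right
          (pow_le_pow_left₀ (by norm_num : (0:ℝ) ≤ 6) hnR 3) (by linarith : (0:ℝ) ≤ (n:ℝ))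
        push_cast
        nlinarith
      have : (2:ℝ) ^ m * 2 ^ n * 2 < Real.exp ((n : ℝ) ^ 4 / 4) := by
        exact (hpow.trans hexp2).trans_lt (Real.exp_lt_exp.2 hlt)
      rw [Real.exp_neg, ← div_eq_mul_inv, div_lt_one (Real.exp_pos _)]
      exact this
    have hpos : (0:ℝ) < ((2 : ℝ) ^ m) ^ (2 ^ n) := by positivity
    rw [hcardG] at hfinal
    nlinarith [Real.exp_pos (-((n : ℝ) ^ 4 / 4))]
end

section
/- Let A_i be finite-dimensional Hilbert spaces for i = 1,...,n, let ρ be a density operator on (⊗_i A_i) ⊗ E for an auxiliary space E, and let C_i, S_i be Hermitian operators on A_i ⊗ B_i (with C_i acting trivially on B_i and satisfying ±C_i ≤ S_i after extending ρ to include the B_i factors). Then ‖tr_{A}(ρ_{AE} · ∏_i C_i)‖₁ ≤ tr(ρ_{AB} · ∏_i S_i), where the partial trace is over A = ⊗_i A_i. -/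
open Matrix ComplexOrder

/-- The trace norm `‖X‖₁ = tr √(Xᴴ X)` of a matrix. -/
noncomputable def traceNorm {n : Type*} [Fintype n] [DecidableEq n] (X : Matrix n n ℂ) : ℝ :=
  (((((Matrix.posSemidef_conjTranspose_mul_self X).1.eigenvectorUnitary : Matrix n n ℂ) *
      diagonal (fun i => ((Real.sqrt ((Matrix.posSemidef_conjTranspose_mul_self X).1.eigenvalues i) : ℝ) : ℂ)) *
      (star ((Matrix.posSemidef_conjTranspose_mul_self X).1.eigenvectorUnitary : Matrix n n ℂ)))).trace).re

/-- Partial trace over the first tensor factor. -/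
noncomputable def ptraceLeft {α β : Type*} [Fintype α]
    (M : Matrix (α × β) (α × β) ℂ) : Matrix β β ℂ :=
  Matrix.of fun b b' => ∑ a, M (a, b) (a, b')

section Aux

open scoped MatrixOrder Matrix.Norms.L2Operator

lemma Matrix.posSemidef_iff_eq_transpose_mul_self {m : Type*} [Fintype m] [DecidableEq m]
    {A : Matrix m m ℂ} : A.PosSemidef ↔ ∃ B : Matrix m m ℂ, A = Bᴴ * B := by
  rw [← Matrix.nonneg_iff_posSemidef, CStarAlgebra.nonneg_iff_eq_star_mul_self]
  simp [Matrix.star_eq_conjTranspose]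

lemma traceNorm_eq_sqrt {E : Type*} [Fintype E] [DecidableEq E] (X : Matrix E E ℂ) :
    traceNorm X = ((CFC.sqrt (Xᴴ * X)).trace).re := by
  have hP := Matrix.posSemidef_conjTranspose_mul_self X
  rw [CFC.sqrt_eq_real_sqrt _ hP.nonneg, cfcₙ_eq_cfc, hP.1.cfc_eq, Matrix.IsHermitian.cfc,
    Unitary.conjStarAlgAut_apply]
  rfl

lemma psd_pair {ι κ : Type*} [Fintype ι] [Fintype κ] [DecidableEq ι] [DecidableEq κ]
    {M : Matrix ι ι ℂ} {N : Matrix κ κ ℂ} (hM : M.PosSemidef) (hN : N.PosSemidef) :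
    (Matrix.of fun p q : ι × κ => M p.1 q.1 * N p.2 q.2).PosSemidef := by
  obtain ⟨A, rfl⟩ := posSemidef_iff_eq_transpose_mul_self.mp hM
  obtain ⟨B, rfl⟩ := posSemidef_iff_eq_transpose_mul_self.mp hN
  rw [posSemidef_iff_eq_transpose_mul_self]
  refine ⟨Matrix.of fun p q : ι × κ => A p.1 q.1 * B p.2 q.2, ?_⟩
  ext ⟨i, k⟩ ⟨j, l⟩
  simp only [Matrix.mul_apply, Matrix.conjTranspose_apply, Matrix.of_apply, star_mul',
    Fintype.sum_prod_type, Finset.sum_mul_sum]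
  refine Finset.sum_congr rfl fun i' _ => Finset.sum_congr rfl fun k' _ => by ring

lemma psd_pi {n : ℕ} {κ : Fin n → Type*} [∀ i, Fintype (κ i)] [∀ i, DecidableEq (κ i)]
    {M : ∀ i, Matrix (κ i) (κ i) ℂ} (h : ∀ i, (M i).PosSemidef) :
    (Matrix.of fun p q : ∀ i, κ i => ∏ i, M i (p i) (q i)).PosSemidef := by
  choose A hA using fun i => posSemidef_iff_eq_transpose_mul_self.mp (h i)
  rw [posSemidef_iff_eq_transpose_mul_self]
  refine ⟨Matrix.of fun p q : ∀ i, κ i => ∏ i, A i (p i) (q i), ?_⟩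
  ext p q
  simp only [Matrix.of_apply, Matrix.mul_apply, Matrix.conjTranspose_apply]
  have h1 : ∀ i : Fin n, M i (p i) (q i) = ∑ s : κ i, star (A i s (p i)) * A i s (q i) := by
    intro i
    conv_lhs => rw [hA i]
    rw [Matrix.mul_apply]
    simp [Matrix.conjTranspose_apply]
  rw [Finset.prod_congr rfl fun i _ => h1 i, Finset.prod_univ_sum, Fintype.piFinset_univ]
  refine Finset.sum_congr rfl fun r _ => ?_
  rw [Finset.prod_mul_distrib, ← star_prod]

lemma trace_ctms_nonneg {ι : Type*} [Fintype ι] (C : Matrix ι ι ℂ) :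
    0 ≤ (Cᴴ * C).trace := by
  rw [Matrix.trace]
  refine Finset.sum_nonneg fun j _ => ?_
  rw [Matrix.diag_apply, Matrix.mul_apply]
  exact Finset.sum_nonneg fun i _ => by
    simpa [Matrix.conjTranspose_apply] using star_mul_self_nonneg (C i j)

lemma trace_mul_psd_nonneg {ι : Type*} [Fintype ι] [DecidableEq ι]
    {M N : Matrix ι ι ℂ} (hM : M.PosSemidef) (hN : N.PosSemidef) :
    0 ≤ ((M * N).trace).re := by
  obtain ⟨A, rfl⟩ := posSemidef_iff_eq_transpose_mul_self.mp hM
  obtain ⟨B, rfl⟩ := posSemidef_iff_eq_transpose_mul_self.mp hN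
  have key : (Aᴴ * A * (Bᴴ * B)).trace = ((B * Aᴴ)ᴴ * (B * Aᴴ)).trace := by
    rw [Matrix.conjTranspose_mul, Matrix.conjTranspose_conjTranspose]
    rw [show Aᴴ * A * (Bᴴ * B) = Aᴴ * (A * Bᴴ * B) by noncomm_ring
      , Matrix.trace_mul_comm, show A * Bᴴ * B * Aᴴ = A * Bᴴ * (B * Aᴴ) by noncomm_ring]
  rw [key]
  have := trace_ctms_nonneg (B * Aᴴ)
  rw [Complex.le_def] at this
  exact this.1

lemma psd_real_smul {ι : Type*} [Fintype ι] {M : Matrix ι ι ℂ} (hM : M.PosSemidef)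
    {c : ℝ} (hc : 0 ≤ c) : ((c : ℂ) • M).PosSemidef := by
  constructor
  · unfold Matrix.IsHermitian
    rw [Matrix.conjTranspose_smul, hM.1.eq]
    congr 1
    exact Complex.conj_ofReal c
  · intro x
    exact (hM.smul (a := (c : ℂ)) (by exact_mod_cast hc)).2 x

lemma psd_sum {ι α : Type*} [Fintype ι] (s : Finset α) (f : α → Matrix ι ι ℂ)
    (h : ∀ a ∈ s, (f a).PosSemidef) : (∑ a ∈ s, f a).PosSemidef := by
  classical
  induction s using Finset.induction with
  | empty => simpa using Matrix.PosSemidef.zero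
  | insert _ _ hx ih =>
    rw [Finset.sum_insert hx]
    exact ((h _ (Finset.mem_insert_self _ _)).add
      (ih fun a ha => h a (Finset.mem_insert_of_mem ha)))

lemma prod_sign_expand {n : ℕ} (s c : Fin n → ℂ) (σ : ℂ) :
    (∏ i, s i) + σ * (∏ i, c i) = ∑ T ∈ (Finset.univ : Finset (Fin n)).powerset,
      ((1 + σ * (-1 : ℂ) ^ T.card) * (2:ℂ)⁻¹ ^ n) *
        ((∏ i ∈ T, (s i - c i)) * ∏ i ∈ Finset.univ \ T, (s i + c i)) := by
  have e1 : (∏ i, s i) = (2:ℂ)⁻¹ ^ n * ∑ T ∈ (Finset.univ : Finset (Fin n)).powerset,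
      (∏ i ∈ T, (s i - c i)) * ∏ i ∈ Finset.univ \ T, (s i + c i) := by
    calc ∏ i, s i = ∏ i, ((2:ℂ)⁻¹ * ((s i - c i) + (s i + c i))) :=
          Finset.prod_congr rfl fun i _ => by ring
      _ = (2:ℂ)⁻¹ ^ n * ∏ i, ((s i - c i) + (s i + c i)) := by
          rw [Finset.prod_mul_distrib, Finset.prod_const, Finset.card_univ, Fintype.card_fin]
      _ = _ := by rw [Finset.prod_add]
  have e2 : (∏ i, c i) = (2:ℂ)⁻¹ ^ n * ∑ T ∈ (Finset.univ : Finset (Fin n)).powerset,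
      (-1 : ℂ) ^ T.card * ((∏ i ∈ T, (s i - c i)) * ∏ i ∈ Finset.univ \ T, (s i + c i)) := by
    calc ∏ i, c i = ∏ i, ((2:ℂ)⁻¹ * ((-(s i - c i)) + (s i + c i))) :=
          Finset.prod_congr rfl fun i _ => by ring
      _ = (2:ℂ)⁻¹ ^ n * ∏ i, ((-(s i - c i)) + (s i + c i)) := by
          rw [Finset.prod_mul_distrib, Finset.prod_const, Finset.card_univ, Fintype.card_fin]
      _ = _ := by
          rw [Finset.prod_add]
          congr 1
          refine Finset.sum_congr rfl fun T _ => ?_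
          rw [show (∏ i ∈ T, (-(s i - c i))) = ∏ i ∈ T, ((-1 : ℂ) * (s i - c i)) from
            Finset.prod_congr rfl fun i _ => by ring, Finset.prod_mul_distrib,
            Finset.prod_const]
          ring
  rw [e1, e2, Finset.mul_sum, Finset.mul_sum, Finset.mul_sum, ← Finset.sum_add_distrib]
  exact Finset.sum_congr rfl fun T _ => by ring
lemma psd_pi_combo {n : ℕ} {κ : Fin n → Type*} [∀ i, Fintype (κ i)] [∀ i, DecidableEq (κ i)]
    (S Ce : ∀ i, Matrix (κ i) (κ i) ℂ)
    (hsub : ∀ i, (S i - Ce i).PosSemidef) (hadd : ∀ i, (S i + Ce i).PosSemidef)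
    (σ : ℂ) (hσ : σ = 1 ∨ σ = -1) :
    (Matrix.of fun p q : ∀ i, κ i =>
      (∏ i, S i (p i) (q i)) + σ * ∏ i, Ce i (p i) (q i)).PosSemidef := by
  have key : (Matrix.of fun p q : ∀ i, κ i =>
      (∏ i, S i (p i) (q i)) + σ * ∏ i, Ce i (p i) (q i)) =
      ∑ T ∈ (Finset.univ : Finset (Fin n)).powerset,
        ((1 + σ * (-1 : ℂ) ^ T.card) * (2:ℂ)⁻¹ ^ n) •
          (Matrix.of fun p q : ∀ i, κ i =>
            ∏ i, (if i ∈ T then S i - Ce i else S i + Ce i) (p i) (q i)) := by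
    ext p q
    simp only [Matrix.of_apply, Matrix.sum_apply, Matrix.smul_apply, smul_eq_mul]
    rw [prod_sign_expand (fun i => S i (p i) (q i)) (fun i => Ce i (p i) (q i)) σ]
    refine Finset.sum_congr rfl fun T hT => ?_
    congr 1
    rw [← Finset.prod_sdiff (Finset.mem_powerset.mp hT), mul_comm]
    congr 1
    · exact Finset.prod_congr rfl fun i hi => by
        simp [(Finset.mem_sdiff.mp hi).2, Matrix.add_apply]
    · exact Finset.prod_congr rfl fun i hi => by
        simp [hi, Matrix.sub_apply]
  rw [key]
  refine psd_sum _ _ fun T _ => ?_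
  have hcoef : ∃ r : ℝ, 0 ≤ r ∧
      (1 + σ * (-1 : ℂ) ^ T.card) * (2:ℂ)⁻¹ ^ n = (r : ℂ) := by
    rcases Nat.even_or_odd T.card with he | ho
    · rcases hσ with rfl | rfl
      · exact ⟨2 * 2⁻¹ ^ n, by positivity, by rw [he.neg_one_pow]; push_cast; ring⟩
      · exact ⟨0, le_refl _, by rw [he.neg_one_pow]; push_cast; ring⟩
    · rcases hσ with rfl | rfl
      · exact ⟨0, le_refl _, by rw [ho.neg_one_pow]; push_cast; ring⟩
      · exact ⟨2 * 2⁻¹ ^ n, by positivity, by rw [ho.neg_one_pow]; push_cast; ring⟩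
  obtain ⟨r, hr0, hrc⟩ := hcoef
  rw [hrc]
  refine psd_real_smul (psd_pi fun i => ?_) hr0
  split_ifs with h
  · exact hsub i
  · exact hadd i

lemma traceNorm_decomp {E : Type*} [Fintype E] [DecidableEq E] {X : Matrix E E ℂ}
    (hX : X.IsHermitian) :
    ∃ Hp Hm : Matrix E E ℂ, Hp.PosSemidef ∧ Hm.PosSemidef ∧ Hp + Hm = 1 ∧
      traceNorm X = ((X * (Hp - Hm)).trace).re := by
  set U : Matrix E E ℂ := (Matrix.IsHermitian.eigenvectorUnitary hX : Matrix E E ℂ) with hU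
  have huU : Uᴴ * U = 1 := by
    rw [← Matrix.star_eq_conjTranspose]
    exact Matrix.mem_unitaryGroup_iff'.mp (Matrix.IsHermitian.eigenvectorUnitary hX).2
  have hUu : U * Uᴴ = 1 := by
    rw [← Matrix.star_eq_conjTranspose]
    exact Matrix.mem_unitaryGroup_iff.mp (Matrix.IsHermitian.eigenvectorUnitary hX).2
  set ev : E → ℝ := hX.eigenvalues with hev
  have hdgmul : ∀ f g : E → ℂ, (U * diagonal f * Uᴴ) * (U * diagonal g * Uᴴ)
      = U * diagonal (fun j => f j * g j) * Uᴴ := by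
    intro f g
    rw [show (diagonal fun j => f j * g j) = diagonal f * diagonal g by
      rw [Matrix.diagonal_mul_diagonal]]
    simp only [Matrix.mul_assoc]
    rw [← Matrix.mul_assoc Uᴴ U, huU, one_mul]
  have hdgadd : ∀ f g : E → ℂ, (U * diagonal f * Uᴴ) + (U * diagonal g * Uᴴ)
      = U * diagonal (fun j => f j + g j) * Uᴴ := by
    intro f g
    rw [show (diagonal fun j => f j + g j) = diagonal f + diagonal g by
      rw [Matrix.diagonal_add], Matrix.mul_add, Matrix.add_mul]
  have hdgsub : ∀ f g : E → ℂ, (U * diagonal f * Uᴴ) - (U * diagonal g * Uᴴ)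
      = U * diagonal (fun j => f j - g j) * Uᴴ := by
    intro f g
    rw [show (diagonal fun j => f j - g j) = diagonal f - diagonal g by
      rw [Matrix.diagonal_sub], Matrix.mul_sub, Matrix.sub_mul]
  have htr : ∀ f : E → ℂ, (U * diagonal f * Uᴴ).trace = ∑ j, f j := by
    intro f
    rw [Matrix.trace_mul_cycle, huU, one_mul, Matrix.trace_diagonal]
  have hpsd : ∀ f : E → ℝ, (∀ j, 0 ≤ f j) →
      (U * diagonal (fun j => (f j : ℂ)) * Uᴴ).PosSemidef := by
    intro f hf
    exact (Matrix.posSemidef_diagonal_iff.mpr fun j => by exact_mod_cast hf j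
      ).mul_mul_conjTranspose_same U
  have hspec : X = U * diagonal (fun j => (ev j : ℂ)) * Uᴴ := by
    conv_lhs => rw [hX.spectral_theorem]
    rfl
  set fp : E → ℝ := fun j => if 0 ≤ ev j then 1 else 0 with hfp
  set fm : E → ℝ := fun j => if 0 ≤ ev j then 0 else 1 with hfm
  refine ⟨U * diagonal (fun j => (fp j : ℂ)) * Uᴴ, U * diagonal (fun j => (fm j : ℂ)) * Uᴴ,
    hpsd fp (fun j => by simp only [hfp]; split_ifs <;> norm_num),
    hpsd fm (fun j => by simp only [hfm]; split_ifs <;> norm_num), ?_, ?_⟩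
  · rw [hdgadd]
    have : (fun j => (fp j : ℂ) + (fm j : ℂ)) = fun _ => (1:ℂ) := by
      funext j
      simp only [hfp, hfm]
      split_ifs <;> norm_num
    rw [this, Matrix.diagonal_one, mul_one, hUu]
  · set w : E → ℂ := fun j => ((|ev j| : ℝ) : ℂ) with hw
    have hfun1 : (fun j => (ev j : ℂ) * ((fp j : ℂ) - (fm j : ℂ))) = w := by
      funext j
      simp only [hw, hfp, hfm]
      split_ifs with h
      · rw [abs_of_nonneg h]; push_cast; ring
      · rw [abs_of_neg (lt_of_not_ge h)]; push_cast; ring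
    have hXHd : X * (U * diagonal (fun j => (fp j : ℂ)) * Uᴴ
        - U * diagonal (fun j => (fm j : ℂ)) * Uᴴ)
        = U * diagonal w * Uᴴ := by
      rw [hdgsub]
      conv_lhs => rw [hspec]
      rw [hdgmul, hfun1]
    have hfun2 : (fun j => w j * w j) = (fun j => (ev j : ℂ) * (ev j : ℂ)) := by
      funext j
      simp only [hw, ← Complex.ofReal_mul, abs_mul_abs_self]
    have hR : (U * diagonal w * Uᴴ).PosSemidef := hpsd _ (fun j => abs_nonneg _)
    have hR2 : (U * diagonal w * Uᴴ) ^ 2 = Xᴴ * X := by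
      rw [hX.eq]
      conv_rhs => rw [hspec]
      rw [pow_two, hdgmul, hdgmul, hfun2]
    have hsqrt : (U * diagonal w * Uᴴ)
        = CFC.sqrt (Xᴴ * X) :=
      (CFC.sqrt_unique (by rw [← pow_two]; exact hR2) hR.nonneg).symm
    rw [traceNorm_eq_sqrt, ← hsqrt, hXHd, htr]


lemma trace_ptraceLeft_mul {α β : Type*} [Fintype α] [Fintype β] [DecidableEq α]
    (M : Matrix (α × β) (α × β) ℂ) (K : Matrix β β ℂ) :
    (ptraceLeft M * K).trace
      = (M * (Matrix.of fun p q : α × β =>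
          (if p.1 = q.1 then (1:ℂ) else 0) * K p.2 q.2)).trace := by
  rw [Matrix.trace, Matrix.trace]
  simp only [Matrix.diag_apply, Matrix.mul_apply, ptraceLeft, Matrix.of_apply,
    Fintype.sum_prod_type, ite_mul, one_mul, zero_mul, mul_ite, mul_zero]
  conv_rhs => enter [2, a, 2, b]; rw [Finset.sum_comm]
  simp only [Finset.sum_ite_eq', Finset.mem_univ, if_true, Finset.sum_mul]
  conv_rhs => rw [Finset.sum_comm]
  refine Finset.sum_congr rfl fun b _ => Finset.sum_comm

lemma trace_ptraceMid {α β E : Type*} [Fintype α] [Fintype β] [Fintype E] [DecidableEq β]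
    (ρ : Matrix ((α × β) × E) ((α × β) × E) ℂ) (N : Matrix (α × E) (α × E) ℂ) :
    ((Matrix.of fun p q : α × E => ∑ b, ρ ((p.1, b), p.2) ((q.1, b), q.2)) * N).trace
      = (ρ * (Matrix.of fun p q : (α × β) × E =>
          N (p.1.1, p.2) (q.1.1, q.2) * (if p.1.2 = q.1.2 then 1 else 0))).trace := by
  rw [Matrix.trace, Matrix.trace]
  simp only [Matrix.diag_apply, Matrix.mul_apply, Matrix.of_apply,
    Fintype.sum_prod_type, mul_ite, mul_zero, mul_one, Finset.sum_mul]
  -- RHS: ∑ a ∑ b ∑ e ∑ a' ∑ b' ∑ e', ite (b' = b) (ρ * N) 0  (roughly)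
  conv_rhs => enter [2, a, 2, b, 2, e, 2, a1]; rw [Finset.sum_comm]
  simp only [Finset.sum_ite_eq', Finset.mem_univ, if_true]
  -- now RHS: ∑ a ∑ b ∑ e ∑ a' ∑ e', ρ ((a,b),e) ((a',b),e') * N (a',e') (a,e)
  -- LHS: ∑ a ∑ e ∑ a' ∑ e' ∑ b, ρ ((a,b),e) ((a',b),e') * N (a',e') (a,e)
  refine Finset.sum_congr rfl fun a _ => ?_
  conv_rhs => rw [Finset.sum_comm]
  refine Finset.sum_congr rfl fun e _ => ?_
  conv_rhs => rw [Finset.sum_comm]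
  refine Finset.sum_congr rfl fun a1 _ => Finset.sum_comm

lemma trace_ptraceRight {P E : Type*} [Fintype P] [Fintype E] [DecidableEq E]
    (ρ : Matrix (P × E) (P × E) ℂ) (M : Matrix P P ℂ) :
    ((Matrix.of fun p q : P => ∑ e, ρ (p, e) (q, e)) * M).trace
      = (ρ * (Matrix.of fun p q : P × E =>
          M p.1 q.1 * (if p.2 = q.2 then 1 else 0))).trace := by
  rw [Matrix.trace, Matrix.trace]
  simp only [Matrix.diag_apply, Matrix.mul_apply, Matrix.of_apply,
    Fintype.sum_prod_type, mul_ite, mul_zero, mul_one, Finset.sum_mul,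
    Finset.sum_ite_eq', Finset.mem_univ, if_true]
  refine Finset.sum_congr rfl fun p _ => ?_
  rw [Finset.sum_comm]

end Aux

/-- Trace-norm bound for the correlator term: if `±(Cᵢ ⊗ 1_{Bᵢ}) ≤ Sᵢ` on each round, then
`‖tr_A (ρ_{AE} ∏ᵢ Cᵢ)‖₁ ≤ tr (ρ_{AB} ∏ᵢ Sᵢ)`. -/
theorem traceNorm_correlator_le_shifted_CHSH {n dE : ℕ} {dA dB : Fin n → ℕ}
    (ρ : Matrix (((∀ i, Fin (dA i)) × (∀ i, Fin (dB i))) × Fin dE)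
                (((∀ i, Fin (dA i)) × (∀ i, Fin (dB i))) × Fin dE) ℂ)
    (hρ : ρ.PosSemidef) (hρtr : ρ.trace = 1)
    (C : ∀ i, Matrix (Fin (dA i)) (Fin (dA i)) ℂ)
    (S : ∀ i, Matrix (Fin (dA i) × Fin (dB i)) (Fin (dA i) × Fin (dB i)) ℂ)
    (hC : ∀ i, (C i).IsHermitian) (hS : ∀ i, (S i).IsHermitian)
    (hineq : ∀ i,
      (S i - Matrix.of fun p q : Fin (dA i) × Fin (dB i) =>
        C i p.1 q.1 * (if p.2 = q.2 then 1 else 0)).PosSemidef ∧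
      (S i + Matrix.of fun p q : Fin (dA i) × Fin (dB i) =>
        C i p.1 q.1 * (if p.2 = q.2 then 1 else 0)).PosSemidef) :
    let ρAE : Matrix ((∀ i, Fin (dA i)) × Fin dE) ((∀ i, Fin (dA i)) × Fin dE) ℂ :=
      Matrix.of fun p q => ∑ b, ρ ((p.1, b), p.2) ((q.1, b), q.2)
    let ρAB : Matrix ((∀ i, Fin (dA i)) × (∀ i, Fin (dB i)))
        ((∀ i, Fin (dA i)) × (∀ i, Fin (dB i))) ℂ :=
      Matrix.of fun p q => ∑ e, ρ (p, e) (q, e)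
    let CtensE : Matrix ((∀ i, Fin (dA i)) × Fin dE) ((∀ i, Fin (dA i)) × Fin dE) ℂ :=
      Matrix.of fun p q => (∏ i, C i (p.1 i) (q.1 i)) * (if p.2 = q.2 then 1 else 0)
    let Stens : Matrix ((∀ i, Fin (dA i)) × (∀ i, Fin (dB i)))
        ((∀ i, Fin (dA i)) × (∀ i, Fin (dB i))) ℂ :=
      Matrix.of fun p q => ∏ i, S i (p.1 i, p.2 i) (q.1 i, q.2 i)
    traceNorm (ptraceLeft (ρAE * CtensE)) ≤ ((ρAB * Stens).trace).re := by
  intro ρAE ρAB CtensE Stens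
  classical
  set X : Matrix (Fin dE) (Fin dE) ℂ := ptraceLeft (ρAE * CtensE) with hXdef
  -- the tensor correlator on A ⊗ B
  set Ct : Matrix ((∀ i, Fin (dA i)) × (∀ i, Fin (dB i)))
      ((∀ i, Fin (dA i)) × (∀ i, Fin (dB i))) ℂ :=
    Matrix.of fun p q => (∏ i, C i (p.1 i) (q.1 i)) * (if p.2 = q.2 then 1 else 0) with hCt
  -- the full-space tensor operator
  set W : Matrix ((∀ i, Fin (dA i)) × (∀ i, Fin (dB i)))
      ((∀ i, Fin (dA i)) × (∀ i, Fin (dB i))) ℂ → Matrix (Fin dE) (Fin dE) ℂ →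
      Matrix ((((∀ i, Fin (dA i)) × (∀ i, Fin (dB i))) × Fin dE))
      ((((∀ i, Fin (dA i)) × (∀ i, Fin (dB i))) × Fin dE)) ℂ :=
    fun M K => Matrix.of fun p q => M p.1 q.1 * K p.2 q.2 with hW
  -- entrywise formula for X
  have hXapp : ∀ e e' : Fin dE, X e e' =
      ∑ a, ∑ a', ρAE (a, e) (a', e') * ∏ i, C i (a' i) (a i) := by
    intro e e'
    show ∑ a, (ρAE * CtensE) (a, e) (a, e') = _
    refine Finset.sum_congr rfl fun a _ => ?_
    rw [Matrix.mul_apply, Fintype.sum_prod_type]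
    refine Finset.sum_congr rfl fun a' _ => ?_
    have hCE : ∀ e'' : Fin dE, CtensE (a', e'') (a, e') =
        (∏ i, C i (a' i) (a i)) * (if e'' = e' then 1 else 0) := fun _ => rfl
    simp only [hCE, mul_ite, mul_one, mul_zero, ← mul_assoc]
    rw [Finset.sum_ite_eq' Finset.univ e' _]
    simp
  have hρAEherm : ∀ p q, star (ρAE p q) = ρAE q p := by
    intro p q
    show star (∑ b, ρ ((p.1, b), p.2) ((q.1, b), q.2)) = _
    rw [star_sum]
    exact Finset.sum_congr rfl fun b _ => hρ.1.apply _ _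
  have hXherm : X.IsHermitian := by
    have : Xᴴ = X := by
      ext e e'
      rw [Matrix.conjTranspose_apply, hXapp e' e, hXapp e e', star_sum, Finset.sum_comm]
      simp only [star_sum, star_mul']
      refine Finset.sum_congr rfl fun a _ => Finset.sum_congr rfl fun a' _ => ?_
      rw [hρAEherm, star_prod]
      congr 1
      exact Finset.prod_congr rfl fun i _ => (hC i).apply _ _
    exact this
  -- trace identity:  tr (X K) = tr (ρ W(Ct, K))
  have htraceW : ∀ K : Matrix (Fin dE) (Fin dE) ℂ,
      (X * K).trace = (ρ * W Ct K).trace := by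
    intro K
    rw [hXdef, trace_ptraceLeft_mul (ρAE * CtensE) K, Matrix.mul_assoc]
    have hprod : CtensE * (Matrix.of fun p q : (∀ i, Fin (dA i)) × Fin dE =>
        (if p.1 = q.1 then (1:ℂ) else 0) * K p.2 q.2)
        = Matrix.of fun p q : (∀ i, Fin (dA i)) × Fin dE =>
          (∏ i, C i (p.1 i) (q.1 i)) * K p.2 q.2 := by
      ext ⟨a, e⟩ ⟨a', e'⟩
      rw [Matrix.mul_apply, Fintype.sum_prod_type]
      show ∑ a'', ∑ e'', ((∏ i, C i (a i) (a'' i)) * (if e = e'' then 1 else 0)) *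
        ((if a'' = a' then (1:ℂ) else 0) * K e'' e') = (∏ i, C i (a i) (a' i)) * K e e'
      simp only [mul_ite, ite_mul, mul_zero, zero_mul, mul_one, one_mul,
        Finset.sum_ite_irrel, Finset.sum_const_zero,
        Finset.sum_ite_eq, Finset.sum_ite_eq', Finset.mem_univ, if_true]
    rw [hprod]
    have hB : (ρAE * (Matrix.of fun p q : (∀ i, Fin (dA i)) × Fin dE =>
        (∏ i, C i (p.1 i) (q.1 i)) * K p.2 q.2)).trace
        = (ρ * (Matrix.of fun p q : (((∀ i, Fin (dA i)) × (∀ i, Fin (dB i))) × Fin dE) =>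
            (Matrix.of fun p' q' : (∀ i, Fin (dA i)) × Fin dE =>
              (∏ i, C i (p'.1 i) (q'.1 i)) * K p'.2 q'.2) (p.1.1, p.2) (q.1.1, q.2) *
            (if p.1.2 = q.1.2 then 1 else 0))).trace :=
      trace_ptraceMid ρ _
    rw [hB]
    congr 2
    ext ⟨⟨a, b⟩, e⟩ ⟨⟨a', b'⟩, e'⟩
    show (∏ i, C i (a i) (a' i)) * K e e' * (if b = b' then 1 else 0)
      = ((∏ i, C i (a i) (a' i)) * (if b = b' then 1 else 0)) * K e e'
    ring
  -- trace identity:  tr (ρ W(Stens, 1)) = tr (ρAB Stens)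
  have hStens1 : (ρ * W Stens 1).trace = (ρAB * Stens).trace := by
    have hk : W Stens (1 : Matrix (Fin dE) (Fin dE) ℂ)
        = Matrix.of fun p q : (((∀ i, Fin (dA i)) × (∀ i, Fin (dB i))) × Fin dE) =>
            Stens p.1 q.1 * (if p.2 = q.2 then 1 else 0) := by
      ext p q
      show Stens p.1 q.1 * (1 : Matrix (Fin dE) (Fin dE) ℂ) p.2 q.2 = _
      rw [Matrix.one_apply]
      rfl
    rw [hk]
    exact (trace_ptraceRight ρ Stens).symm
  -- PSD of Stens ± Ct
  have hPSDcombo : ∀ σ : ℂ, σ = 1 ∨ σ = -1 →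
      (Matrix.of fun p q : ((∀ i, Fin (dA i)) × (∀ i, Fin (dB i))) =>
        Stens p q + σ * Ct p q).PosSemidef := by
    intro σ hσ
    have base := psd_pi_combo (κ := fun i => Fin (dA i) × Fin (dB i)) S
      (fun i => Matrix.of fun p q => C i p.1 q.1 * (if p.2 = q.2 then 1 else 0))
      (fun i => (hineq i).1) (fun i => (hineq i).2) σ hσ
    have := base.submatrix
      (fun p : ((∀ i, Fin (dA i)) × (∀ i, Fin (dB i))) => fun i => (p.1 i, p.2 i))
    convert this using 1
    ext ⟨a, b⟩ ⟨a', b'⟩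
    show Stens (a, b) (a', b') + σ * Ct (a, b) (a', b') = _
    rw [Matrix.submatrix_apply, Matrix.of_apply]
    have h1 : Ct (a, b) (a', b') = ∏ i, (Matrix.of fun p q : Fin (dA i) × Fin (dB i) =>
        C i p.1 q.1 * (if p.2 = q.2 then 1 else 0)) (a i, b i) (a' i, b' i) := by
      show (∏ i, C i (a i) (a' i)) * (if b = b' then 1 else 0)
          = ∏ i, (C i (a i) (a' i) * if b i = b' i then 1 else 0)
      by_cases hbb : b = b'
      · subst hbb; simp
      · obtain ⟨i0, hi0⟩ := Function.ne_iff.mp hbb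
        rw [if_neg hbb, mul_zero]
        exact (Finset.prod_eq_zero (Finset.mem_univ i0) (by simp [hi0])).symm
    have h2 : Stens (a, b) (a', b') = ∏ i, S i (a i, b i) (a' i, b' i) := rfl
    rw [h1, h2]
  have hsub : (Stens - Ct).PosSemidef := by
    have := hPSDcombo (-1) (Or.inr rfl)
    convert this using 1
    ext p q
    simp [Matrix.sub_apply]
    ring
  have hadd : (Stens + Ct).PosSemidef := by
    have := hPSDcombo 1 (Or.inl rfl)
    convert this using 1
    ext p q
    simp [Matrix.add_apply]
  -- spectral decomposition of X
  obtain ⟨Hp, Hm, hHp, hHm, hsum1, htn⟩ := traceNorm_decomp hXherm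
  rw [htn]
  -- linearity
  have hWsubM : ∀ (M N : Matrix _ _ ℂ) (K : Matrix (Fin dE) (Fin dE) ℂ),
      W M K - W N K = W (M - N) K := by
    intro M N K; ext p q; simp [hW, Matrix.sub_apply]; ring
  have hWaddM : ∀ (M N : Matrix _ _ ℂ) (K : Matrix (Fin dE) (Fin dE) ℂ),
      W M K + W N K = W (M + N) K := by
    intro M N K; ext p q; simp [hW, Matrix.add_apply]; ring
  have hWaddK : ∀ (M : Matrix _ _ ℂ) (K L : Matrix (Fin dE) (Fin dE) ℂ),
      W M K + W M L = W M (K + L) := by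
    intro M K L; ext p q; simp [hW, Matrix.add_apply]; ring
  have hWsubK : ∀ (M : Matrix _ _ ℂ) (K L : Matrix (Fin dE) (Fin dE) ℂ),
      W M K - W M L = W M (K - L) := by
    intro M K L; ext p q; simp [hW, Matrix.sub_apply]; ring
  -- two PSD inequality steps
  have step1 : ((ρ * W Ct Hp).trace).re ≤ ((ρ * W Stens Hp).trace).re := by
    have hpsd : (W (Stens - Ct) Hp).PosSemidef := psd_pair hsub hHp
    have h0 := trace_mul_psd_nonneg hρ hpsd
    rw [← hWsubM, Matrix.mul_sub, Matrix.trace_sub, Complex.sub_re] at h0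
    linarith
  have step2 : -((ρ * W Ct Hm).trace).re ≤ ((ρ * W Stens Hm).trace).re := by
    have hpsd : (W (Stens + Ct) Hm).PosSemidef := psd_pair hadd hHm
    have h0 := trace_mul_psd_nonneg hρ hpsd
    rw [← hWaddM, Matrix.mul_add, Matrix.trace_add, Complex.add_re] at h0
    linarith
  -- assemble
  have lhs_eq : ((X * (Hp - Hm)).trace).re
      = ((ρ * W Ct Hp).trace).re - ((ρ * W Ct Hm).trace).re := by
    rw [Matrix.mul_sub, Matrix.trace_sub, Complex.sub_re, htraceW, htraceW]
  have rhs_eq : ((ρ * W Stens Hp).trace).re + ((ρ * W Stens Hm).trace).re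
      = ((ρAB * Stens).trace).re := by
    rw [← Complex.add_re, ← Matrix.trace_add, ← Matrix.mul_add, hWaddK, hsum1, hStens1]
  linarith [step1, step2, lhs_eq.le, rhs_eq]
end

section
/- Fix real constants μ, ν with μ, ν ≥ 0 and relative frequencies q₀, q₁ ≥ 0 with q₀ + q₁ = 1. If p_e ≥ 0.74 and p_r = 1 − p_e, then for every CHSH value strictly greater than 2 (i.e., q₀ > 3/4) there exist s ∈ (2, 2√2) and α₀, α₁, β ∈ ℝ satisfying the constraints p_r(√2)^{β−1}(μ_s − 4ν_s) + p_e(√2)^{α₀} = 1 and p_r(√2)^{β−1}(μ_s + 4ν_s) + p_e(√2)^{α₁} = 1 such that p_e(α₀q₀ + α₁q₁) + βp_r ≥ 0. -/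
/-- Coefficient `μ_s = 2 (2 - s²/4)^{-1/2}` of the shifted CHSH operator. -/
noncomputable def muCHSH (s : ℝ) : ℝ := 2 / Real.sqrt (2 - s ^ 2 / 4)

/-- Coefficient `ν_s = (s/4) (2 - s²/4)^{-1/2}` of the shifted CHSH operator. -/
noncomputable def nuCHSH (s : ℝ) : ℝ := (s / 4) / Real.sqrt (2 - s ^ 2 / 4)

lemma sqrt2_pow (x : ℝ) (hx : 0 < x) : Real.sqrt 2 ^ (2 * Real.logb 2 x) = x := by
  rw [Real.sqrt_eq_rpow, ← Real.rpow_mul (by norm_num : (0:ℝ) ≤ 2),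
    show 1/(2:ℝ) * (2 * Real.logb 2 x) = Real.logb 2 x by ring]
  exact Real.rpow_logb (by norm_num) (by norm_num) hx

lemma intkey : (89:ℝ)^(89:ℕ) * 37^(111:ℕ) ≤ 2^(26:ℕ) * 50^(200:ℕ) := by norm_num

lemma hnum0 : 111*Real.log 0.74 + 89*Real.log 1.78 ≤ 26*Real.log 2 := by
  have h74 : Real.log 0.74 = Real.log 37 - Real.log 50 := by
    rw [show (0.74:ℝ) = 37/50 by norm_num, Real.log_div (by norm_num) (by norm_num)]
  have h178 : Real.log 1.78 = Real.log 89 - Real.log 50 := by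
    rw [show (1.78:ℝ) = 89/50 by norm_num, Real.log_div (by norm_num) (by norm_num)]
  have key := Real.log_le_log (by positivity) intkey
  rw [Real.log_mul (by positivity) (by positivity),
      Real.log_mul (by positivity) (by positivity),
      Real.log_pow, Real.log_pow, Real.log_pow, Real.log_pow] at key
  push_cast at key
  linarith

lemma gkey (p : ℝ) (h1 : 0.74 ≤ p) (h2 : p ≤ 1) :
    0 ≤ (1-p)*Real.log 2 - 3/2*(p*Real.log p) - 1/2*((4-3*p)*Real.log (4-3*p)) := by
  set a : ℝ := (1-p)/0.26 with ha_def
  set b : ℝ := (p-0.74)/0.26 with hb_def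
  have ha : 0 ≤ a := by unfold a; linarith [div_nonneg (by linarith : (0:ℝ) ≤ 1-p) (by norm_num : (0:ℝ) ≤ 0.26)]
  have hb : 0 ≤ b := by unfold b; apply div_nonneg <;> [linarith; norm_num]
  have hab : a + b = 1 := by unfold a b; field_simp; ring
  have base := Real.convexOn_mul_log
  have i1 := base.2 (by norm_num : (0.74:ℝ) ∈ Set.Ici (0:ℝ))
      (by norm_num : (1:ℝ) ∈ Set.Ici (0:ℝ)) ha hb hab
  have i2 := base.2 (by norm_num : (1.78:ℝ) ∈ Set.Ici (0:ℝ))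
      (by norm_num : (1:ℝ) ∈ Set.Ici (0:ℝ)) ha hb hab
  simp only [smul_eq_mul, mul_one, Real.log_one, mul_zero, add_zero] at i1 i2
  have e1 : a*0.74 + b = p := by unfold a b; field_simp; ring
  have e2 : a*1.78 + b = 4 - 3*p := by unfold a b; field_simp; ring
  rw [e1] at i1
  rw [e2] at i2
  have hnum := hnum0
  have ha26 : a * 0.26 = 1 - p := by unfold a; field_simp
  have h3 : (1-p)*Real.log 2 = a*(0.26*Real.log 2) := by rw [← ha26]; ring
  linarith [mul_le_mul_of_nonneg_left hnum ha]

/-- If `p_e ≥ 0.74` then for every CHSH value strictly above 2 (i.e. `q₀ > 3/4`) there is a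
feasible choice of `s, α₀, α₁, β` satisfying the spot-checking constraints with
non-negative yield. -/
theorem xor_positive_yield_above_pe (pe : ℝ) (hpe : 0.74 ≤ pe) (hpe1 : pe ≤ 1)
    (q0 q1 : ℝ) (hq0 : 0 ≤ q0) (hq1 : 0 ≤ q1) (hq : q0 + q1 = 1) (hchsh : 3 / 4 < q0) :
    ∃ s ∈ Set.Ioo (2 : ℝ) (2 * Real.sqrt 2), ∃ α0 α1 β : ℝ,
      (1 - pe) * Real.sqrt 2 ^ (β - 1) * (muCHSH s - 4 * nuCHSH s) +
          pe * Real.sqrt 2 ^ α0 = 1 ∧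
      (1 - pe) * Real.sqrt 2 ^ (β - 1) * (muCHSH s + 4 * nuCHSH s) +
          pe * Real.sqrt 2 ^ α1 = 1 ∧
      0 ≤ pe * (α0 * q0 + α1 * q1) + β * (1 - pe) := by
  have hs2 : (1:ℝ) < Real.sqrt 2 := by
    rw [show (1:ℝ) = Real.sqrt 1 by simp]
    exact Real.sqrt_lt_sqrt (by norm_num) (by norm_num)
  have h22 : (2:ℝ) < 2 * Real.sqrt 2 := by linarith
  rcases eq_or_lt_of_le hpe1 with hpe_eq | hpe_lt
  · -- pe = 1 : trivial choices
    subst hpe_eq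
    refine ⟨Real.sqrt 2 + 1, ⟨by linarith, by linarith⟩, 0, 0, 0, ?_, ?_, ?_⟩ <;>
      simp [Real.rpow_zero]
  -- pe < 1
  have hpe0 : (0:ℝ) < pe := by linarith
  set c : ℝ := 4 - 3*pe with hc_def
  have hc1 : 1 < c := by unfold c; linarith
  have hc0 : 0 < c := by linarith
  set β : ℝ := 1 - 2 * Real.logb 2 c with hβ_def
  set E0 : ℝ → ℝ := fun s => (1 - (1-pe)/c * (muCHSH s - 4*nuCHSH s))/pe with hE0_def
  set E1 : ℝ → ℝ := fun s => (1 - (1-pe)/c * (muCHSH s + 4*nuCHSH s))/pe with hE1_def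
  set Y : ℝ → ℝ := fun s =>
    pe * ((2 * Real.logb 2 (E0 s)) * q0 + (2 * Real.logb 2 (E1 s)) * q1) + β * (1 - pe)
    with hY_def
  -- values at s = 2
  have hmu2 : muCHSH 2 = 2 := by
    unfold muCHSH; norm_num
  have hnu2 : nuCHSH 2 = 1/2 := by
    unfold nuCHSH; norm_num
  have hE02 : E0 2 = 1/pe := by
    show (1 - (1-pe)/c * (muCHSH 2 - 4*nuCHSH 2))/pe = 1/pe
    rw [hmu2, hnu2]; norm_num
  have hE12 : E1 2 = 1/c := by
    show (1 - (1-pe)/c * (muCHSH 2 + 4*nuCHSH 2))/pe = 1/c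
    rw [hmu2, hnu2]
    rw [div_eq_div_iff hpe0.ne' hc0.ne']
    field_simp
    ring
  -- continuity at 2
  have hden : ContinuousAt (fun s : ℝ => Real.sqrt (2 - s ^ 2 / 4)) 2 :=
    Real.continuous_sqrt.continuousAt.comp (by fun_prop)
  have hden2 : Real.sqrt (2 - (2:ℝ) ^ 2 / 4) ≠ 0 := by norm_num
  have hmu : ContinuousAt muCHSH 2 := by
    unfold muCHSH
    exact continuousAt_const.div hden hden2
  have hnu : ContinuousAt nuCHSH 2 := by
    unfold nuCHSH
    exact (by fun_prop : ContinuousAt (fun s:ℝ => s/4) 2).div hden hden2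
  have hE0c : ContinuousAt E0 2 := by
    unfold E0
    exact (continuousAt_const.sub (continuousAt_const.mul
      (hmu.sub (continuousAt_const.mul hnu)))).div_const pe
  have hE1c : ContinuousAt E1 2 := by
    unfold E1
    exact (continuousAt_const.sub (continuousAt_const.mul
      (hmu.add (continuousAt_const.mul hnu)))).div_const pe
  have hE02pos : 0 < E0 2 := by rw [hE02]; positivity
  have hE12pos : 0 < E1 2 := by rw [hE12]; positivity
  have hYc : ContinuousAt Y 2 := by
    unfold Y
    exact (continuousAt_const.mul
      (((continuousAt_const.mul ((Real.continuousAt_logb hE02pos.ne').comp hE0c)).mul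
          continuousAt_const).add
        ((continuousAt_const.mul ((Real.continuousAt_logb hE12pos.ne').comp hE1c)).mul
          continuousAt_const))).add continuousAt_const
  -- positivity of Y 2
  have hl2 : 0 < Real.log 2 := Real.log_pos (by norm_num)
  have hY2pos : 0 < Y 2 := by
    show 0 < pe * (2 * Real.logb 2 (E0 2) * q0 + 2 * Real.logb 2 (E1 2) * q1) + β * (1 - pe)
    rw [hE02, hE12, hβ_def]
    have hg := gkey pe hpe hpe1
    have hlog_lt : Real.log pe < Real.log c := Real.log_lt_log hpe0 (by unfold c; linarith)
    rw [Real.logb, Real.logb, Real.logb, Real.log_div one_ne_zero hpe0.ne',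
        Real.log_div one_ne_zero hc0.ne', Real.log_one]
    rw [show q1 = 1 - q0 by linarith]
    set lp := Real.log pe
    set lc := Real.log c
    set l2 := Real.log 2
    have expand : (pe * (2 * ((0 - lp) / l2) * q0 + 2 * ((0 - lc) / l2) * (1 - q0)) +
        (1 - 2 * (lc / l2)) * (1 - pe)) * l2 =
        ((1-pe)*l2 - 3/2*(pe*lp) - 1/2*((4-3*pe)*lc))
          + 2*pe*(q0 - 3/4)*(lc - lp) := by
      field_simp
      ring
    have hq034 : 0 < q0 - 3/4 := by linarith
    have hpos : 0 < (pe * (2 * ((0 - lp) / l2) * q0 + 2 * ((0 - lc) / l2) * (1 - q0)) +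
        (1 - 2 * (lc / l2)) * (1 - pe)) * l2 := by
      rw [expand]
      have : 0 < 2*pe*(q0 - 3/4)*(lc - lp) := mul_pos (mul_pos (by linarith) hq034) (by linarith)
      linarith
    nlinarith [hpos, hl2]
  -- choose s > 2 close to 2
  have hev1 : ∀ᶠ s in nhds (2:ℝ), 0 < Y s := hYc.eventually (eventually_gt_nhds hY2pos)
  have hev2 : ∀ᶠ s in nhds (2:ℝ), 0 < E0 s := hE0c.eventually (eventually_gt_nhds hE02pos)
  have hev3 : ∀ᶠ s in nhds (2:ℝ), 0 < E1 s := hE1c.eventually (eventually_gt_nhds hE12pos)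
  have hmemIoo : Set.Ioo (2:ℝ) (2*Real.sqrt 2) ∈ nhdsWithin (2:ℝ) (Set.Ioi 2) :=
    Ioo_mem_nhdsGT_of_mem ⟨le_refl 2, h22⟩
  have hall : ∀ᶠ s in nhdsWithin (2:ℝ) (Set.Ioi 2),
      (0 < Y s ∧ 0 < E0 s ∧ 0 < E1 s) ∧ s ∈ Set.Ioo (2:ℝ) (2*Real.sqrt 2) :=
    (((hev1.and (hev2.and hev3)).filter_mono nhdsWithin_le_nhds).and
      (Filter.eventually_of_mem hmemIoo fun x hx => hx))
  obtain ⟨s, ⟨hYs, hE0s, hE1s⟩, hsIoo⟩ := hall.exists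
  have hbm1 : β - 1 = 2 * Real.logb 2 c⁻¹ := by
    rw [Real.logb_inv]; unfold β; ring
  refine ⟨s, hsIoo, 2 * Real.logb 2 (E0 s), 2 * Real.logb 2 (E1 s), β, ?_, ?_, ?_⟩
  · rw [sqrt2_pow _ hE0s, hbm1, sqrt2_pow _ (by positivity : (0:ℝ) < c⁻¹)]
    show (1-pe) * c⁻¹ * (muCHSH s - 4*nuCHSH s) +
        pe * ((1 - (1-pe)/c * (muCHSH s - 4*nuCHSH s))/pe) = 1
    field_simp
    ring
  · rw [sqrt2_pow _ hE1s, hbm1, sqrt2_pow _ (by positivity : (0:ℝ) < c⁻¹)]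
    show (1-pe) * c⁻¹ * (muCHSH s + 4*nuCHSH s) +
        pe * ((1 - (1-pe)/c * (muCHSH s + 4*nuCHSH s))/pe) = 1
    field_simp
    ring
  · exact hYs.le
end

section
/- Let A₁, A₂ be Hilbert spaces with Hermitian operators C₁ on A₁ and C₂ on A₂, and S₁, S₂ Hermitian with ±C₁ ≤ S₁ and ±C₂ ≤ S₂. Then ±(C₁ ⊗ C₂) ≤ S₁ ⊗ S₂, proved via the averages (1/2)[(S₁+C₁)⊗(S₂+C₂) + (S₁−C₁)⊗(S₂−C₂)] = S₁⊗S₂ + C₁⊗C₂ ≥ 0 and (1/2)[(S₁+C₁)⊗(S₂−C₂) + (S₁−C₁)⊗(S₂+C₂)] = S₁⊗S₂ − C₁⊗C₂ ≥ 0. -/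
open Matrix ComplexOrder Kronecker

lemma kronecker_conjTranspose' {d₁ d₂ : Type*} [Fintype d₁] [Fintype d₂]
    (A : Matrix d₁ d₁ ℂ) (B : Matrix d₂ d₂ ℂ) :
    (A ⊗ₖ B)ᴴ = Aᴴ ⊗ₖ Bᴴ := by
  ext ⟨i, j⟩ ⟨k, l⟩
  simp [conjTranspose_apply, kroneckerMap_apply]

lemma posSemidef_kronecker {d₁ d₂ : Type*} [Fintype d₁] [Fintype d₂]
    [DecidableEq d₁] [DecidableEq d₂]
    {A : Matrix d₁ d₁ ℂ} {B : Matrix d₂ d₂ ℂ}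
    (hA : A.PosSemidef) (hB : B.PosSemidef) : (A ⊗ₖ B).PosSemidef := by
  exact hA.kronecker hB

lemma posSemidef_half_smul {d : Type*} [Fintype d]
    {A : Matrix d d ℂ} (hA : A.PosSemidef) : ((1/2 : ℂ) • A).PosSemidef := by
  rw [posSemidef_iff_dotProduct_mulVec]
  constructor
  · have := hA.1
    unfold Matrix.IsHermitian at *
    rw [conjTranspose_smul, this]
    congr 1
    simp
  · intro x
    rw [smul_mulVec, dotProduct_smul]
    have h := hA.dotProduct_mulVec_nonneg x
    rw [smul_eq_mul]
    exact mul_nonneg (by norm_num [Complex.le_def]) h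

/-- Two-factor tensorization of the operator inequality `±C ≤ S`:
if `±C₁ ≤ S₁` and `±C₂ ≤ S₂` then `±(C₁ ⊗ C₂) ≤ S₁ ⊗ S₂`. -/
theorem kronecker_loewner_tensorization
    {d₁ d₂ : Type*} [Fintype d₁] [Fintype d₂] [DecidableEq d₁] [DecidableEq d₂]
    (C₁ S₁ : Matrix d₁ d₁ ℂ) (C₂ S₂ : Matrix d₂ d₂ ℂ)
    (hC₁ : C₁.IsHermitian) (hS₁ : S₁.IsHermitian)
    (hC₂ : C₂.IsHermitian) (hS₂ : S₂.IsHermitian)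
    (h₁p : (S₁ + C₁).PosSemidef) (h₁m : (S₁ - C₁).PosSemidef)
    (h₂p : (S₂ + C₂).PosSemidef) (h₂m : (S₂ - C₂).PosSemidef) :
    (S₁ ⊗ₖ S₂ - C₁ ⊗ₖ C₂).PosSemidef ∧ (S₁ ⊗ₖ S₂ + C₁ ⊗ₖ C₂).PosSemidef := by
  have hpm := posSemidef_kronecker h₁p h₂m
  have hmp := posSemidef_kronecker h₁m h₂p
  have hpp := posSemidef_kronecker h₁p h₂p
  have hmm := posSemidef_kronecker h₁m h₂m
  constructor
  · have : S₁ ⊗ₖ S₂ - C₁ ⊗ₖ C₂ =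
        (1/2 : ℂ) • ((S₁ + C₁) ⊗ₖ (S₂ - C₂) + (S₁ - C₁) ⊗ₖ (S₂ + C₂)) := by
      ext ⟨i, j⟩ ⟨k, l⟩
      simp only [Matrix.smul_apply, Matrix.add_apply, Matrix.sub_apply, kroneckerMap_apply, smul_eq_mul]
      ring
    rw [this]
    exact posSemidef_half_smul (hpm.add hmp)
  · have : S₁ ⊗ₖ S₂ + C₁ ⊗ₖ C₂ =
        (1/2 : ℂ) • ((S₁ + C₁) ⊗ₖ (S₂ + C₂) + (S₁ - C₁) ⊗ₖ (S₂ - C₂)) := by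
      ext ⟨i, j⟩ ⟨k, l⟩
      simp only [Matrix.smul_apply, Matrix.add_apply, Matrix.sub_apply, kroneckerMap_apply, smul_eq_mul]
      ring
    rw [this]
    exact posSemidef_half_smul (hpp.add hmm)
end
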